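/- Let a ∈ ℝ and let F ∈ ℂ[x] be nonzero with Re F(x) ≥ 0 for every x ∈ ℂ with Re x = a. Let k be the number of distinct roots of F with real part equal to a and odd multiplicity. Then: (1) ρ_{>a}(F) ≤ ρ_{<a}(F) + k + 1 and ρ_{<a}(F) ≤ ρ_{>a}(F) + k + 1; in particular ρ_{>a}(F) ≤ ρ_{≤a}(F) + 1 and ρ_{<a}(F) ≤ ρ_{≥a}(F) + 1. (2) If ρ_{>a}(F) = ρ_{<a}(F) + k + 1, then F has odd degree 2d − 1 and the leading coefficient of F is a real number of sign (−1)^d; if ρ_{<a}(F) = ρ_{>a}(F) + k + 1, then F has odd degree 2d − 1 and the leading coefficient of F is a real number of sign (−1)^{d−1}. -/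

import Mathlib

open Polynomial
open scoped Classical

noncomputable section

/-- Number of roots of `F` (with multiplicity) with real part `< a`. -/
def rhoLT (F : ℂ[X]) (a : ℝ) : ℕ := (F.roots.filter (fun z => z.re < a)).card

/-- Number of roots of `F` (with multiplicity) with real part `> a`. -/
def rhoGT (F : ℂ[X]) (a : ℝ) : ℕ := (F.roots.filter (fun z => a < z.re)).card

/-- Number of roots of `F` (with multiplicity) with real part `≤ a`. -/
def rhoLE (F : ℂ[X]) (a : ℝ) : ℕ := (F.roots.filter (fun z => z.re ≤ a)).card

/-- Number of roots of `F` (with multiplicity) with real part `≥ a`. -/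
def rhoGE (F : ℂ[X]) (a : ℝ) : ℕ := (F.roots.filter (fun z => a ≤ z.re)).card

namespace Stmt15Aux
open Filter Topology Set

def pt (a t : ℝ) : ℂ := ⟨a, t⟩

@[simp] lemma pt_re (a t : ℝ) : (pt a t).re = a := rfl
@[simp] lemma pt_im (a t : ℝ) : (pt a t).im = t := rfl

lemma pt_eq (a t : ℝ) : pt a t = (a : ℂ) + (t : ℝ) * Complex.I := by
  apply Complex.ext <;> simp [pt]

lemma continuous_pt (a : ℝ) : Continuous (pt a) := by
  have : pt a = fun t : ℝ => (a : ℂ) + (t : ℝ) * Complex.I := funext (pt_eq a)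
  rw [this]; continuity

/-- generic: tendsto of a multiset sum -/
lemma tendsto_multiset_sum {ι : Type*} (m : Multiset ι) (f : ι → ℝ → ℝ) (g : ι → ℝ)
    (l : Filter ℝ) (h : ∀ i ∈ m, Tendsto (f i) l (𝓝 (g i))) :
    Tendsto (fun t => (m.map (fun i => f i t)).sum) l (𝓝 (m.map g).sum) := by
  induction m using Multiset.induction_on with
  | empty => simpa using tendsto_const_nhds
  | cons a s ih =>
      simp only [Multiset.map_cons, Multiset.sum_cons]
      exact (h a (Multiset.mem_cons_self a s)).add
        (ih (fun i hi => h i (Multiset.mem_cons_of_mem hi)))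

/-- generic: sum of indicator over multiset -/
lemma sum_map_ite {ι : Type*} (m : Multiset ι) (P : ι → Prop) [DecidablePred P] (c : ℝ) :
    (m.map (fun z => if P z then c else 0)).sum = c * (m.filter P).card := by
  induction m using Multiset.induction_on with
  | empty => simp
  | cons a s ih =>
      by_cases h : P a <;>
        simp [Multiset.filter_cons, h, ih, mul_add, add_comm]

/-- generic: arg of a product as angle -/
lemma arg_multiset_prod (m : Multiset ℂ) (h : ∀ z ∈ m, z ≠ 0) :
    ((m.prod.arg : Real.Angle)) = (m.map (fun z => (z.arg : Real.Angle))).sum := by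
  induction m using Multiset.induction_on with
  | empty => simp [Complex.arg_one]
  | cons a s ih =>
      have ha : a ≠ 0 := h a (Multiset.mem_cons_self a s)
      have hs : ∀ z ∈ s, z ≠ 0 := fun z hz => h z (Multiset.mem_cons_of_mem hz)
      have hsp : s.prod ≠ 0 := Multiset.prod_ne_zero (fun h0 => hs 0 h0 rfl)
      simp only [Multiset.prod_cons, Multiset.map_cons, Multiset.sum_cons]
      rw [Complex.arg_mul_coe_angle ha hsp, ih hs]

/-- limit of arg along vertical-ish line, at +infinity -/
lemma tendsto_arg_top (c v : ℝ) :
    Tendsto (fun t : ℝ => Complex.arg ((c : ℂ) + ((t - v : ℝ) : ℂ) * Complex.I)) atTop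
      (𝓝 (Real.pi / 2)) := by
  have hV : Tendsto (fun t : ℝ => ((c / t : ℝ) : ℂ) + (((t - v) / t : ℝ) : ℂ) * Complex.I)
      atTop (𝓝 Complex.I) := by
    have h1 : Tendsto (fun t : ℝ => c / t) atTop (𝓝 0) :=
      tendsto_const_nhds.div_atTop tendsto_id
    have h2 : Tendsto (fun t : ℝ => (t - v) / t) atTop (𝓝 1) := by
      have : Tendsto (fun t : ℝ => 1 - v / t) atTop (𝓝 1) := by
        simpa using tendsto_const_nhds.sub (tendsto_const_nhds.div_atTop (tendsto_id (α := ℝ)))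
      refine this.congr' ?_
      filter_upwards [eventually_gt_atTop 0] with t ht
      have ht' : t ≠ 0 := ne_of_gt ht
      field_simp
    have := ((Complex.continuous_ofReal.tendsto 0).comp h1).add
      (((Complex.continuous_ofReal.tendsto 1).comp h2).mul
        (tendsto_const_nhds (x := Complex.I)))
    simpa using this
  have harg : Tendsto (fun t : ℝ => Complex.arg (((c / t : ℝ) : ℂ) + (((t - v) / t : ℝ) : ℂ) * Complex.I)) atTop (𝓝 (Real.pi / 2)) := by
    have hc : ContinuousAt Complex.arg Complex.I := by
      apply Complex.continuousAt_arg
      simp [Complex.mem_slitPlane_iff]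
    have := hc.tendsto.comp hV
    simpa [Complex.arg_I, Function.comp_def] using this
  refine harg.congr' ?_
  filter_upwards [eventually_gt_atTop 0] with t ht
  have h1t : (0:ℝ) < 1 / t := by positivity
  have : ((c / t : ℝ) : ℂ) + (((t - v) / t : ℝ) : ℂ) * Complex.I
      = ((1 / t : ℝ) : ℂ) * ((c : ℂ) + ((t - v : ℝ) : ℂ) * Complex.I) := by
    push_cast
    field_simp
    try ring
  rw [this, Complex.arg_real_mul _ h1t]

/-- limit of arg along vertical-ish line, at -infinity -/
lemma tendsto_arg_bot (c v : ℝ) :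
    Tendsto (fun t : ℝ => Complex.arg ((c : ℂ) + ((t - v : ℝ) : ℂ) * Complex.I)) atBot
      (𝓝 (-(Real.pi / 2))) := by
  have hV : Tendsto (fun t : ℝ => ((c / (-t) : ℝ) : ℂ) + (((t - v) / (-t) : ℝ) : ℂ) * Complex.I)
      atBot (𝓝 (-Complex.I)) := by
    have hneg : Tendsto (fun t : ℝ => -t) atBot atTop := tendsto_neg_atBot_atTop
    have h1 : Tendsto (fun t : ℝ => c / (-t)) atBot (𝓝 0) :=
      tendsto_const_nhds.div_atTop hneg
    have h2 : Tendsto (fun t : ℝ => (t - v) / (-t)) atBot (𝓝 (-1)) := by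
      have : Tendsto (fun t : ℝ => -1 + v / t) atBot (𝓝 (-1)) := by
        have hv : Tendsto (fun t : ℝ => v / t) atBot (𝓝 0) := by
          have := (tendsto_const_nhds (x := v)).div_atTop hneg
          have h2 := this.neg
          simp only [neg_zero] at h2
          refine h2.congr (fun t => by rw [div_neg, neg_neg])
        simpa using (tendsto_const_nhds (x := (-1:ℝ))).add hv
      refine this.congr' ?_
      filter_upwards [eventually_lt_atBot 0] with t ht
      have ht' : t ≠ 0 := ne_of_lt ht
      rw [div_neg]
      field_simp
      ring
    have := ((Complex.continuous_ofReal.tendsto 0).comp h1).add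
      (((Complex.continuous_ofReal.tendsto (-1)).comp h2).mul
        (tendsto_const_nhds (x := Complex.I)))
    simpa using this
  have harg : Tendsto (fun t : ℝ => Complex.arg (((c / (-t) : ℝ) : ℂ) + (((t - v) / (-t) : ℝ) : ℂ) * Complex.I)) atBot (𝓝 (-(Real.pi / 2))) := by
    have hc : ContinuousAt Complex.arg (-Complex.I) := by
      apply Complex.continuousAt_arg
      simp [Complex.mem_slitPlane_iff]
    have := hc.tendsto.comp hV
    simpa [Complex.arg_neg_I, Function.comp_def] using this
  refine harg.congr' ?_
  filter_upwards [eventually_lt_atBot 0] with t ht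
  have h1t : (0:ℝ) < 1 / (-t) := one_div_pos.mpr (neg_pos.mpr ht)
  have : ((c / (-t) : ℝ) : ℂ) + (((t - v) / (-t) : ℝ) : ℂ) * Complex.I
      = ((1 / (-t) : ℝ) : ℂ) * ((c : ℂ) + ((t - v : ℝ) : ℂ) * Complex.I) := by
    have ht' : (t:ℂ) ≠ 0 := by exact_mod_cast ne_of_lt ht
    push_cast
    field_simp
    try ring
  rw [this, Complex.arg_real_mul _ h1t]


/-! ### Definitions -/

def rhoLT' (F : ℂ[X]) (a : ℝ) : ℕ := (F.roots.filter (fun z => z.re < a)).card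
def rhoGT' (F : ℂ[X]) (a : ℝ) : ℕ := (F.roots.filter (fun z => a < z.re)).card

def θf (a : ℝ) (z : ℂ) (t : ℝ) : ℝ :=
  if z.re < a then (pt a t - z).arg
  else if a < z.re then (z - pt a t).arg + Real.pi
  else if t < z.im then -(Real.pi/2) else Real.pi/2

def θm (a : ℝ) (z : ℂ) (t : ℝ) : ℝ :=
  if z.re < a then (pt a t - z).arg
  else if a < z.re then (z - pt a t).arg + Real.pi
  else if t ≤ z.im then -(Real.pi/2) else Real.pi/2

def Af (a : ℝ) (F : ℂ[X]) (t : ℝ) : ℝ :=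
  F.leadingCoeff.arg + ((F.roots.map (fun z => θf a z t)).sum)

def Am (a : ℝ) (F : ℂ[X]) (t : ℝ) : ℝ :=
  F.leadingCoeff.arg + ((F.roots.map (fun z => θm a z t)).sum)

def gf (a : ℝ) (F : ℂ[X]) (t : ℝ) : ℝ := (F.eval (pt a t)).arg

def lineS (a : ℝ) (F : ℂ[X]) : Finset ℝ :=
  ((F.roots.filter (fun z => z.re = a)).map Complex.im).toFinset

def mS (a : ℝ) (F : ℂ[X]) (s : ℝ) : ℕ :=
  (F.roots.filter (fun z => z.re = a ∧ z.im = s)).card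

def Jf (a : ℝ) (F : ℂ[X]) (t : ℝ) : ℤ :=
  if h : ∃ j : ℤ, gf a F t = Af a F t + 2*Real.pi*j then h.choose else 0

/-! ### Basic lemmas -/

lemma mem_lineS {a : ℝ} {F : ℂ[X]} {s : ℝ} :
    s ∈ lineS a F ↔ ∃ z ∈ F.roots, z.re = a ∧ z.im = s := by
  simp only [lineS, Multiset.mem_toFinset, Multiset.mem_map, Multiset.mem_filter]
  constructor
  · rintro ⟨z, ⟨hz, hre⟩, him⟩; exact ⟨z, hz, hre, him⟩
  · rintro ⟨z, hz, hre, him⟩; exact ⟨z, ⟨hz, hre⟩, him⟩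

lemma factor_ne {a t : ℝ} {F : ℂ[X]} (ht : t ∉ lineS a F) {z : ℂ} (hz : z ∈ F.roots) :
    pt a t - z ≠ 0 := by
  intro h
  have hz' : pt a t = z := sub_eq_zero.mp h
  exact ht (mem_lineS.mpr ⟨z, hz, by rw [← hz']; simp, by rw [← hz']; simp⟩)

lemma eval_factored {F : ℂ[X]} (hF : F ≠ 0) (w : ℂ) :
    F.eval w = F.leadingCoeff * ((F.roots.map (fun z => w - z)).prod) := by
  have hcard : Multiset.card F.roots = F.natDegree :=
    Polynomial.splits_iff_card_roots.mp (IsAlgClosed.splits F)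
  conv_lhs => rw [← Polynomial.C_leadingCoeff_mul_prod_multiset_X_sub_C hcard]
  rw [eval_mul, eval_C, Polynomial.eval_multiset_prod, Multiset.map_map]
  congr 1
  apply congrArg Multiset.prod
  apply Multiset.map_congr rfl
  intro z _
  simp

lemma eval_ne {a t : ℝ} {F : ℂ[X]} (hF : F ≠ 0) (ht : t ∉ lineS a F) :
    F.eval (pt a t) ≠ 0 := by
  rw [eval_factored hF]
  refine mul_ne_zero (Polynomial.leadingCoeff_ne_zero.mpr hF) (Multiset.prod_ne_zero ?_)
  intro h0
  obtain ⟨z, hz, hz0⟩ := Multiset.mem_map.mp h0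
  exact factor_ne ht hz hz0

lemma theta_angle {a t : ℝ} {z : ℂ} (hz : pt a t - z ≠ 0) :
    ((θf a z t : Real.Angle)) = (((pt a t - z).arg : ℝ) : Real.Angle) := by
  rcases lt_trichotomy z.re a with h | h | h
  · rw [θf, if_pos h]
  · -- z.re = a
    have hre : (pt a t - z).re = 0 := by simp [h]
    have him : t ≠ z.im := by
      intro he
      exact hz (by apply Complex.ext <;> simp [h, he])
    rw [θf, if_neg (by rw [h]; exact lt_irrefl a), if_neg (by rw [h]; exact lt_irrefl a)]
    rcases lt_or_gt_of_ne him with hlt | hgt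
    · rw [if_pos hlt]
      have : (pt a t - z).arg = -(Real.pi/2) :=
        Complex.arg_eq_neg_pi_div_two_iff.mpr ⟨hre, by simpa using sub_neg.mpr hlt⟩
      rw [this]
    · rw [if_neg (not_lt.mpr (le_of_lt hgt))]
      have : (pt a t - z).arg = Real.pi/2 :=
        Complex.arg_eq_pi_div_two_iff.mpr ⟨hre, by simpa using sub_pos.mpr hgt⟩
      rw [this]
  · -- a < z.re
    rw [θf, if_neg (not_lt.mpr (le_of_lt h)), if_pos h]
    have hzz : z - pt a t ≠ 0 := fun hc => hz (by rw [← neg_sub] at hc; simpa using neg_eq_zero.mp hc)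
    have := Complex.arg_neg_coe_angle hzz
    rw [neg_sub] at this
    rw [Real.Angle.coe_add, ← this]

lemma exists_J {a t : ℝ} {F : ℂ[X]} (hF : F ≠ 0) (ht : t ∉ lineS a F) :
    ∃ j : ℤ, gf a F t = Af a F t + 2*Real.pi*j := by
  have hangle : ((gf a F t : ℝ) : Real.Angle) = ((Af a F t : ℝ) : Real.Angle) := by
    rw [gf, eval_factored hF]
    have hc0 : F.leadingCoeff ≠ 0 := Polynomial.leadingCoeff_ne_zero.mpr hF
    have hne : ∀ w ∈ F.roots.map (fun z => pt a t - z), w ≠ 0 := by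
      intro w hw
      obtain ⟨z, hz, rfl⟩ := Multiset.mem_map.mp hw
      exact factor_ne ht hz
    have hprod : (F.roots.map (fun z => pt a t - z)).prod ≠ 0 :=
      Multiset.prod_ne_zero (fun h0 => hne 0 h0 rfl)
    rw [Complex.arg_mul_coe_angle hc0 hprod, arg_multiset_prod _ hne]
    rw [Af, Real.Angle.coe_add]
    have hsum : (((Multiset.map (fun z => θf a z t) F.roots).sum : ℝ) : Real.Angle)
        = ((Multiset.map (fun z => θf a z t) F.roots).map (fun x : ℝ => (x : Real.Angle))).sum :=
      map_multiset_sum Real.Angle.coeHom _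
    rw [hsum]
    congr 1
    rw [Multiset.map_map, Multiset.map_map]
    apply congrArg Multiset.sum
    apply Multiset.map_congr rfl
    intro z hz
    exact (theta_angle (factor_ne ht hz)).symm
  obtain ⟨j, hj⟩ := Real.Angle.angle_eq_iff_two_pi_dvd_sub.mp hangle
  exact ⟨j, by linarith⟩

lemma J_spec {a t : ℝ} {F : ℂ[X]} (hF : F ≠ 0) (ht : t ∉ lineS a F) :
    gf a F t = Af a F t + 2*Real.pi*(Jf a F t) := by
  have h := exists_J hF ht
  rw [Jf, dif_pos h]
  exact h.choose_spec

lemma g_bound {a : ℝ} {F : ℂ[X]} (hpos : ∀ x : ℂ, x.re = a → 0 ≤ (F.eval x).re) (t : ℝ) :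
    |gf a F t| ≤ Real.pi/2 :=
  Complex.abs_arg_le_pi_div_two_iff.mpr (hpos (pt a t) (pt_re a t))

lemma eval_slitPlane {a t : ℝ} {F : ℂ[X]} (hF : F ≠ 0)
    (hpos : ∀ x : ℂ, x.re = a → 0 ≤ (F.eval x).re) (ht : t ∉ lineS a F) :
    F.eval (pt a t) ∈ Complex.slitPlane := by
  rw [Complex.mem_slitPlane_iff]
  have h0 := hpos (pt a t) (pt_re a t)
  rcases eq_or_lt_of_le h0 with heq | hlt
  · right
    intro him
    exact eval_ne hF ht (Complex.ext heq.symm him)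
  · exact Or.inl hlt

lemma g_contAt {a t : ℝ} {F : ℂ[X]} (hF : F ≠ 0)
    (hpos : ∀ x : ℂ, x.re = a → 0 ≤ (F.eval x).re) (ht : t ∉ lineS a F) :
    ContinuousAt (gf a F) t := by
  have hcont : Continuous fun u : ℝ => F.eval (pt a u) :=
    (Polynomial.continuous F).comp (continuous_pt a)
  have := ContinuousAt.comp (x := t) (g := Complex.arg)
    (Complex.continuousAt_arg (eval_slitPlane hF hpos ht)) hcont.continuousAt
  exact this


/-! ### θ lemmas -/

lemma theta_eq_of_ne {a : ℝ} {z : ℂ} (h : z.re ≠ a) (t : ℝ) : θm a z t = θf a z t := by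
  rcases lt_or_gt_of_ne h with hlt | hgt
  · rw [θm, θf, if_pos hlt, if_pos hlt]
  · rw [θm, θf, if_neg (not_lt.mpr (le_of_lt hgt)), if_neg (not_lt.mpr (le_of_lt hgt)),
      if_pos hgt, if_pos hgt]

lemma theta_line_val {a : ℝ} {z : ℂ} (h : z.re = a) (t : ℝ) :
    θf a z t = if t < z.im then -(Real.pi/2) else Real.pi/2 := by
  rw [θf, if_neg (by rw [h]; exact lt_irrefl a), if_neg (by rw [h]; exact lt_irrefl a)]

lemma thetam_line_val {a : ℝ} {z : ℂ} (h : z.re = a) (t : ℝ) :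
    θm a z t = if t ≤ z.im then -(Real.pi/2) else Real.pi/2 := by
  rw [θm, if_neg (by rw [h]; exact lt_irrefl a), if_neg (by rw [h]; exact lt_irrefl a)]

lemma theta_continuous_of_ne {a : ℝ} {z : ℂ} (h : z.re ≠ a) : Continuous (θf a z) := by
  rcases lt_or_gt_of_ne h with hlt | hgt
  · have hfe : θf a z = fun t => (pt a t - z).arg := by
      funext t; rw [θf, if_pos hlt]
    rw [hfe, continuous_iff_continuousAt]
    intro t
    have hcont : Continuous fun u : ℝ => pt a u - z := (continuous_pt a).sub continuous_const
    have hs : (pt a t - z) ∈ Complex.slitPlane := by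
      rw [Complex.mem_slitPlane_iff]; left
      simpa using sub_pos.mpr hlt
    exact ContinuousAt.comp (x := t) (g := Complex.arg)
      (Complex.continuousAt_arg hs) hcont.continuousAt
  · have hfe : θf a z = fun t => (z - pt a t).arg + Real.pi := by
      funext t; rw [θf, if_neg (not_lt.mpr (le_of_lt hgt)), if_pos hgt]
    rw [hfe]
    refine Continuous.add ?_ continuous_const
    rw [continuous_iff_continuousAt]
    intro t
    have hcont : Continuous fun u : ℝ => z - pt a u := continuous_const.sub (continuous_pt a)
    have hs : (z - pt a t) ∈ Complex.slitPlane := by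
      rw [Complex.mem_slitPlane_iff]; left
      simpa using sub_pos.mpr hgt
    exact ContinuousAt.comp (x := t) (g := Complex.arg)
      (Complex.continuousAt_arg hs) hcont.continuousAt

lemma theta_line_right {a s : ℝ} {z : ℂ} (h : z.re = a) :
    Filter.Tendsto (θf a z) (𝓝[>] s) (𝓝 (θf a z s)) := by
  rcases lt_or_ge s z.im with hlt | hle
  · refine tendsto_const_nhds.congr' ?_
    filter_upwards [Ioo_mem_nhdsGT_of_mem (Set.left_mem_Ico.mpr hlt)] with t ht
    rw [theta_line_val h t, if_pos ht.2, theta_line_val h s, if_pos hlt]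
  · refine tendsto_const_nhds.congr' ?_
    filter_upwards [self_mem_nhdsWithin] with t ht
    rw [Set.mem_Ioi] at ht
    rw [theta_line_val h t, if_neg (not_lt.mpr (le_of_lt (lt_of_le_of_lt hle ht))),
      theta_line_val h s, if_neg (not_lt.mpr hle)]

lemma theta_line_left {a s : ℝ} {z : ℂ} (h : z.re = a) :
    Filter.Tendsto (θf a z) (𝓝[<] s) (𝓝 (θm a z s)) := by
  rcases le_or_gt s z.im with hle | hlt
  · refine tendsto_const_nhds.congr' ?_
    filter_upwards [self_mem_nhdsWithin] with t ht
    rw [Set.mem_Iio] at ht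
    rw [theta_line_val h t, if_pos (lt_of_lt_of_le ht hle), thetam_line_val h s, if_pos hle]
  · refine tendsto_const_nhds.congr' ?_
    filter_upwards [Ioo_mem_nhdsLT_of_mem (Set.right_mem_Ioc.mpr hlt)] with t ht
    rw [theta_line_val h t, if_neg (not_lt.mpr (le_of_lt ht.1)), thetam_line_val h s,
      if_neg (not_le.mpr hlt)]

lemma theta_line_contAt {a t : ℝ} {z : ℂ} (h : z.re = a) (hne : t ≠ z.im) :
    ContinuousAt (θf a z) t := by
  rcases lt_or_gt_of_ne hne with hlt | hgt
  · have hc : ContinuousAt (fun _ : ℝ => -(Real.pi/2)) t := continuousAt_const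
    apply hc.congr
    filter_upwards [Iio_mem_nhds hlt] with u hu
    rw [Set.mem_Iio] at hu
    rw [theta_line_val h u, if_pos hu]
  · have hc : ContinuousAt (fun _ : ℝ => Real.pi/2) t := continuousAt_const
    apply hc.congr
    filter_upwards [Ioi_mem_nhds hgt] with u hu
    rw [Set.mem_Ioi] at hu
    rw [theta_line_val h u, if_neg (not_lt.mpr (le_of_lt hu))]

/-! ### A lemmas -/

lemma A_tendsto_right (a : ℝ) (F : ℂ[X]) (s : ℝ) :
    Filter.Tendsto (Af a F) (𝓝[>] s) (𝓝 (Af a F s)) := by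
  apply Filter.Tendsto.const_add
  apply tendsto_multiset_sum
  intro z _
  by_cases h : z.re = a
  · exact theta_line_right h
  · exact ((theta_continuous_of_ne h).continuousAt).mono_left nhdsWithin_le_nhds

lemma A_tendsto_left (a : ℝ) (F : ℂ[X]) (s : ℝ) :
    Filter.Tendsto (Af a F) (𝓝[<] s) (𝓝 (Am a F s)) := by
  apply Filter.Tendsto.const_add
  apply tendsto_multiset_sum
  intro z _
  by_cases h : z.re = a
  · exact theta_line_left h
  · rw [theta_eq_of_ne h]
    exact ((theta_continuous_of_ne h).continuousAt).mono_left nhdsWithin_le_nhds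

lemma A_contAt {a t : ℝ} {F : ℂ[X]} (ht : t ∉ lineS a F) : ContinuousAt (Af a F) t := by
  apply ContinuousAt.add continuousAt_const
  apply tendsto_multiset_sum
  intro z hz
  by_cases h : z.re = a
  · refine theta_line_contAt h ?_
    intro he
    exact ht (mem_lineS.mpr ⟨z, hz, h, he.symm⟩)
  · exact (theta_continuous_of_ne h).continuousAt

lemma pt_sub (a t : ℝ) (z : ℂ) :
    pt a t - z = ((a - z.re : ℝ) : ℂ) + ((t - z.im : ℝ) : ℂ) * Complex.I := by
  apply Complex.ext <;> simp [pt]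

lemma sub_pt (a t : ℝ) (z : ℂ) :
    z - pt a t = ((z.re - a : ℝ) : ℂ) + ((z.im - t : ℝ) : ℂ) * Complex.I := by
  apply Complex.ext <;> simp [pt]

lemma A_top (a : ℝ) (F : ℂ[X]) :
    Filter.Tendsto (Af a F) Filter.atTop
      (𝓝 (F.leadingCoeff.arg + (Multiset.card F.roots) * (Real.pi/2))) := by
  have hsum : ((F.roots.map (fun _ : ℂ => Real.pi/2)).sum) = (Multiset.card F.roots) * (Real.pi/2) := by
    simp [Multiset.map_const', Multiset.sum_replicate, nsmul_eq_mul]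
  rw [← hsum]
  apply Filter.Tendsto.const_add
  apply tendsto_multiset_sum
  intro z _
  rcases lt_trichotomy z.re a with hlt | heq | hgt
  · refine (tendsto_arg_top (a - z.re) z.im).congr (fun t => ?_)
    rw [θf, if_pos hlt, pt_sub]
  · refine tendsto_const_nhds.congr' ?_
    filter_upwards [Filter.eventually_gt_atTop z.im] with t ht
    rw [theta_line_val heq, if_neg (not_lt.mpr (le_of_lt ht))]
  · have hcomp := (tendsto_arg_bot (z.re - a) (-z.im)).comp tendsto_neg_atTop_atBot
    have h2 : Filter.Tendsto (fun t : ℝ => (z - pt a t).arg + Real.pi) Filter.atTop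
        (𝓝 (-(Real.pi/2) + Real.pi)) := by
      refine (hcomp.congr (fun t => ?_)).add tendsto_const_nhds
      have : (-t - (-z.im) : ℝ) = (z.im - t : ℝ) := by ring
      rw [Function.comp_apply, this, ← sub_pt]
    have hval : -(Real.pi/2) + Real.pi = Real.pi/2 := by ring
    rw [hval] at h2
    refine h2.congr (fun t => ?_)
    rw [θf, if_neg (not_lt.mpr (le_of_lt hgt)), if_pos hgt]

lemma A_bot (a : ℝ) (F : ℂ[X]) :
    Filter.Tendsto (Af a F) Filter.atBot
      (𝓝 (F.leadingCoeff.arg + ((Multiset.card F.roots) * (-(Real.pi/2))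
        + 2*Real.pi*(rhoGT' F a)))) := by
  have hsum : ((F.roots.map (fun z : ℂ => -(Real.pi/2) + (if a < z.re then 2*Real.pi else 0))).sum)
      = (Multiset.card F.roots) * (-(Real.pi/2)) + 2*Real.pi*(rhoGT' F a) := by
    rw [Multiset.sum_map_add, sum_map_ite]
    simp [Multiset.map_const', Multiset.sum_replicate, nsmul_eq_mul, rhoGT']
  rw [← hsum]
  apply Filter.Tendsto.const_add
  apply tendsto_multiset_sum
  intro z _
  rcases lt_trichotomy z.re a with hlt | heq | hgt
  · have h1 : -(Real.pi/2) + (if a < z.re then 2*Real.pi else 0) = -(Real.pi/2) := by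
      rw [if_neg (not_lt.mpr (le_of_lt hlt))]; ring
    rw [h1]
    refine (tendsto_arg_bot (a - z.re) z.im).congr (fun t => ?_)
    rw [θf, if_pos hlt, pt_sub]
  · have h1 : -(Real.pi/2) + (if a < z.re then 2*Real.pi else 0) = -(Real.pi/2) := by
      rw [if_neg (by rw [heq]; exact lt_irrefl a)]; ring
    rw [h1]
    refine tendsto_const_nhds.congr' ?_
    filter_upwards [Filter.eventually_lt_atBot z.im] with t ht
    rw [theta_line_val heq, if_pos ht]
  · have h1 : -(Real.pi/2) + (if a < z.re then 2*Real.pi else 0) = Real.pi/2 + Real.pi := by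
      rw [if_pos hgt]; ring
    rw [h1]
    have hcomp := (tendsto_arg_top (z.re - a) (-z.im)).comp tendsto_neg_atBot_atTop
    have h2 : Filter.Tendsto (fun t : ℝ => (z - pt a t).arg + Real.pi) Filter.atBot
        (𝓝 (Real.pi/2 + Real.pi)) := by
      refine (hcomp.congr (fun t => ?_)).add tendsto_const_nhds
      have he : (-t - (-z.im) : ℝ) = (z.im - t : ℝ) := by ring
      rw [Function.comp_apply, he, ← sub_pt]
    refine h2.congr (fun t => ?_)
    rw [θf, if_neg (not_lt.mpr (le_of_lt hgt)), if_pos hgt]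

lemma A_sub_Am (a : ℝ) (F : ℂ[X]) (s : ℝ) :
    Af a F s - Am a F s = Real.pi * (mS a F s) := by
  have hmap : (F.roots.map (fun z => θf a z s))
      = (F.roots.map (fun z => θm a z s + (if (z.re = a ∧ z.im = s) then Real.pi else 0))) := by
    apply Multiset.map_congr rfl
    intro z _
    by_cases h : z.re = a
    · by_cases h2 : z.im = s
      · rw [theta_line_val h s, thetam_line_val h s, h2, if_neg (lt_irrefl s),
          if_pos (le_refl s), if_pos ⟨h, rfl⟩]
        ring
      · rcases lt_or_gt_of_ne (fun he => h2 he.symm : s ≠ z.im) with hlt | hgt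
        · rw [theta_line_val h s, thetam_line_val h s, if_pos hlt, if_pos (le_of_lt hlt),
            if_neg (fun hc => h2 hc.2)]
          ring
        · rw [theta_line_val h s, thetam_line_val h s, if_neg (not_lt.mpr (le_of_lt hgt)),
            if_neg (not_le.mpr hgt), if_neg (fun hc => h2 hc.2)]
          ring
    · rw [theta_eq_of_ne h, if_neg (fun hc => h hc.1)]
      ring
  rw [Af, Am, hmap, Multiset.sum_map_add, sum_map_ite]
  rw [mS]
  ring


/-! ### J lemmas -/

lemma J_const {a : ℝ} {F : ℂ[X]} (hF : F ≠ 0)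
    (hpos : ∀ x : ℂ, x.re = a → 0 ≤ (F.eval x).re)
    {t1 t2 : ℝ} (h12 : t1 ≤ t2) (hS : ∀ u ∈ Set.Icc t1 t2, u ∉ lineS a F) :
    Jf a F t1 = Jf a F t2 := by
  set h : ℝ → ℝ := fun t => gf a F t - Af a F t with hh
  have hcont : ContinuousOn h (Set.Icc t1 t2) := fun u hu =>
    ((g_contAt hF hpos (hS u hu)).sub (A_contAt (hS u hu))).continuousWithinAt
  have hval : ∀ u ∈ Set.Icc t1 t2, h u = 2*Real.pi*(Jf a F u) := by
    intro u hu
    have := J_spec hF (hS u hu)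
    simp only [hh]
    linarith
  by_contra hne
  have ht1m : t1 ∈ Set.Icc t1 t2 := Set.left_mem_Icc.mpr h12
  have ht2m : t2 ∈ Set.Icc t1 t2 := Set.right_mem_Icc.mpr h12
  have hpi := Real.pi_pos
  rcases lt_or_gt_of_ne hne with hlt | hgt
  · -- Jf t1 < Jf t2
    have hj : ((Jf a F t1 : ℝ)) + 1 ≤ (Jf a F t2 : ℝ) := by
      exact_mod_cast Int.add_one_le_iff.mpr hlt
    have hy : (2*Real.pi*(Jf a F t1) + Real.pi) ∈ Set.Icc (h t1) (h t2) := by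
      rw [hval t1 ht1m, hval t2 ht2m]
      constructor <;> nlinarith
    obtain ⟨u, hu, hyu⟩ := intermediate_value_Icc h12 hcont hy
    rw [hval u hu] at hyu
    have : (2*(Jf a F t1) + 1 : ℝ) = 2*(Jf a F u) := by
      have h2 : Real.pi * (2*(Jf a F t1) + 1) = Real.pi * (2*(Jf a F u)) := by linarith
      exact mul_left_cancel₀ (ne_of_gt hpi) h2
    have : (2*(Jf a F t1) + 1 : ℤ) = 2*(Jf a F u) := by exact_mod_cast this
    omega
  · have hj : ((Jf a F t2 : ℝ)) + 1 ≤ (Jf a F t1 : ℝ) := by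
      exact_mod_cast Int.add_one_le_iff.mpr hgt
    have hy : (2*Real.pi*(Jf a F t2) + Real.pi) ∈ Set.Icc (h t2) (h t1) := by
      rw [hval t1 ht1m, hval t2 ht2m]
      constructor <;> nlinarith
    obtain ⟨u, hu, hyu⟩ := intermediate_value_Icc' h12 hcont hy
    rw [hval u hu] at hyu
    have : (2*(Jf a F t2) + 1 : ℝ) = 2*(Jf a F u) := by
      have h2 : Real.pi * (2*(Jf a F t2) + 1) = Real.pi * (2*(Jf a F u)) := by linarith
      exact mul_left_cancel₀ (ne_of_gt hpi) h2
    have : (2*(Jf a F t2) + 1 : ℤ) = 2*(Jf a F u) := by exact_mod_cast this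
    omega

lemma jump {a : ℝ} {F : ℂ[X]} (hF : F ≠ 0)
    (hpos : ∀ x : ℂ, x.re = a → 0 ≤ (F.eval x).re)
    {s tL tR : ℝ} (h1 : tL < s) (h2 : s < tR)
    (hL : ∀ u ∈ Set.Ico tL s, u ∉ lineS a F)
    (hR : ∀ u ∈ Set.Ioc s tR, u ∉ lineS a F) :
    |(mS a F s : ℝ) + 2*((Jf a F tR : ℝ) - (Jf a F tL : ℝ))| ≤ 1 := by
  have hpi := Real.pi_pos
  -- left limit
  have hLlim : Filter.Tendsto (gf a F) (𝓝[<] s)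
      (𝓝 (Am a F s + 2*Real.pi*(Jf a F tL))) := by
    refine ((A_tendsto_left a F s).add tendsto_const_nhds).congr' ?_
    filter_upwards [Ioo_mem_nhdsLT_of_mem (Set.right_mem_Ioc.mpr h1)] with u hu
    have huS : u ∉ lineS a F := hL u ⟨le_of_lt hu.1, hu.2⟩
    have hJu : Jf a F tL = Jf a F u := by
      refine J_const hF hpos (le_of_lt hu.1) ?_
      intro w hw
      exact hL w ⟨hw.1, lt_of_le_of_lt hw.2 hu.2⟩
    rw [hJu]
    exact (J_spec hF huS).symm
  have hRlim : Filter.Tendsto (gf a F) (𝓝[>] s)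
      (𝓝 (Af a F s + 2*Real.pi*(Jf a F tR))) := by
    refine ((A_tendsto_right a F s).add tendsto_const_nhds).congr' ?_
    filter_upwards [Ioo_mem_nhdsGT_of_mem (Set.left_mem_Ico.mpr h2)] with u hu
    have huS : u ∉ lineS a F := hR u ⟨hu.1, le_of_lt hu.2⟩
    have hJu : Jf a F u = Jf a F tR := by
      refine J_const hF hpos (le_of_lt hu.2) ?_
      intro w hw
      exact hR w ⟨lt_of_lt_of_le hu.1 hw.1, hw.2⟩
    rw [← hJu]
    exact (J_spec hF huS).symm
  have hLb : |Am a F s + 2*Real.pi*(Jf a F tL)| ≤ Real.pi/2 := by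
    have habs : Filter.Tendsto (fun u => |gf a F u|) (𝓝[<] s)
        (𝓝 |Am a F s + 2*Real.pi*(Jf a F tL)|) := hLlim.abs
    exact le_of_tendsto habs (Filter.Eventually.of_forall (fun u => g_bound hpos u))
  have hRb : |Af a F s + 2*Real.pi*(Jf a F tR)| ≤ Real.pi/2 := by
    have habs : Filter.Tendsto (fun u => |gf a F u|) (𝓝[>] s)
        (𝓝 |Af a F s + 2*Real.pi*(Jf a F tR)|) := hRlim.abs
    exact le_of_tendsto habs (Filter.Eventually.of_forall (fun u => g_bound hpos u))
  have hdiff : |Real.pi * ((mS a F s : ℝ) + 2*((Jf a F tR : ℝ) - (Jf a F tL : ℝ)))| ≤ Real.pi := by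
    have hsub := A_sub_Am a F s
    have e1 := abs_le.mp hLb
    have e2 := abs_le.mp hRb
    rw [abs_le]
    constructor <;> nlinarith
  rw [abs_mul, abs_of_pos hpi] at hdiff
  nlinarith [abs_nonneg ((mS a F s : ℝ) + 2*((Jf a F tR : ℝ) - (Jf a F tL : ℝ)))]

lemma jump' {a : ℝ} {F : ℂ[X]} (hF : F ≠ 0)
    (hpos : ∀ x : ℂ, x.re = a → 0 ≤ (F.eval x).re)
    {s tL tR : ℝ} (h1 : tL < s) (h2 : s < tR)
    (hL : ∀ u ∈ Set.Ico tL s, u ∉ lineS a F)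
    (hR : ∀ u ∈ Set.Ioc s tR, u ∉ lineS a F) :
    |(mS a F s : ℝ) + 2*((Jf a F tR : ℝ) - (Jf a F tL : ℝ))|
      ≤ (if Odd (mS a F s) then (1:ℝ) else 0) := by
  set x : ℤ := (mS a F s : ℤ) + 2*((Jf a F tR) - (Jf a F tL)) with hx
  have hxr : ((x : ℤ) : ℝ) = (mS a F s : ℝ) + 2*((Jf a F tR : ℝ) - (Jf a F tL : ℝ)) := by
    push_cast [hx]; ring
  have h1' : |(x:ℝ)| ≤ 1 := by rw [hxr]; exact jump hF hpos h1 h2 hL hR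
  have hxle : |x| ≤ 1 := by exact_mod_cast h1'
  by_cases hodd : Odd (mS a F s)
  · rw [if_pos hodd, ← hxr]
    exact_mod_cast hxle
  · rw [Nat.not_odd_iff_even] at hodd
    obtain ⟨c, hc⟩ := id hodd
    have hc' : (mS a F s : ℤ) = c + c := by exact_mod_cast hc
    have hxb := abs_le.mp hxle
    have hx0 : x = 0 := by omega
    rw [if_neg (by rw [Nat.not_odd_iff_even]; exact hodd), ← hxr, hx0]
    simp

/-! ### core counting induction -/

lemma core_count {a : ℝ} {F : ℂ[X]} (hF : F ≠ 0)
    (hpos : ∀ x : ℂ, x.re = a → 0 ≤ (F.eval x).re) :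
    ∀ N : ℕ, ∀ t1 t2 : ℝ, t1 ∉ lineS a F → t2 ∉ lineS a F → t1 ≤ t2 →
    ((lineS a F).filter (fun s => t1 < s ∧ s < t2)).card = N →
    |((F.roots.filter (fun z => z.re = a ∧ t1 < z.im ∧ z.im < t2)).card : ℝ)
      + 2*((Jf a F t2 : ℝ) - (Jf a F t1 : ℝ))|
      ≤ (((lineS a F).filter (fun s => (t1 < s ∧ s < t2) ∧ Odd (mS a F s))).card : ℝ) := by
  intro N
  induction N using Nat.strong_induction_on with
  | _ N ih =>
  intro t1 t2 h1 h2 h12 hcard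
  rcases Nat.eq_zero_or_pos N with h0 | hNpos
  · -- empty middle
    subst h0
    have hempty : ∀ u ∈ Set.Icc t1 t2, u ∉ lineS a F := by
      intro u hu huS
      rcases eq_or_lt_of_le hu.1 with he | hlt1
      · exact h1 (he ▸ huS)
      rcases eq_or_lt_of_le hu.2 with he | hlt2
      · exact h2 (he ▸ huS)
      have : u ∈ (lineS a F).filter (fun s => t1 < s ∧ s < t2) :=
        Finset.mem_filter.mpr ⟨huS, hlt1, hlt2⟩
      rw [Finset.card_eq_zero.mp hcard] at this
      exact absurd this (Finset.notMem_empty u)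
    have hM0 : (F.roots.filter (fun z => z.re = a ∧ t1 < z.im ∧ z.im < t2)).card = 0 := by
      rw [Multiset.card_eq_zero, Multiset.filter_eq_nil]
      rintro z hz ⟨hre, hi1, hi2⟩
      exact hempty z.im ⟨le_of_lt hi1, le_of_lt hi2⟩ (mem_lineS.mpr ⟨z, hz, hre, rfl⟩)
    rw [hM0, J_const hF hpos h12 hempty]
    simp
  · -- inductive step
    set T := (lineS a F).filter (fun s => t1 < s ∧ s < t2) with hT
    have hTne : T.Nonempty := Finset.card_pos.mp (by rw [hcard]; exact hNpos)
    set s0 := T.max' hTne with hs0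
    have hs0T : s0 ∈ T := T.max'_mem hTne
    have hs0S : s0 ∈ lineS a F := (Finset.mem_filter.mp hs0T).1
    have hs0a : t1 < s0 := (Finset.mem_filter.mp hs0T).2.1
    have hs0b : s0 < t2 := (Finset.mem_filter.mp hs0T).2.2
    set T' := T.filter (fun u => u < s0) with hT'
    -- the gap bound u0 below s0
    have hu0 : ∃ u0 : ℝ, t1 ≤ u0 ∧ u0 < s0 ∧ ∀ v ∈ T, v < s0 → v ≤ u0 := by
      by_cases hne : T'.Nonempty
      · refine ⟨T'.max' hne, ?_, ?_, ?_⟩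
        · have := (Finset.mem_filter.mp (T'.max'_mem hne)).1
          exact le_of_lt (Finset.mem_filter.mp this).2.1
        · exact (Finset.mem_filter.mp (T'.max'_mem hne)).2
        · intro v hv hvs
          exact T'.le_max' v (Finset.mem_filter.mpr ⟨hv, hvs⟩)
      · refine ⟨t1, le_refl t1, hs0a, ?_⟩
        intro v hv hvs
        exact absurd ⟨v, Finset.mem_filter.mpr ⟨hv, hvs⟩⟩ hne
    obtain ⟨u0, hu0a, hu0b, hu0max⟩ := hu0
    set tm := (u0 + s0)/2 with htm
    set tp := (s0 + t2)/2 with htp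
    have htm1 : u0 < tm := by rw [htm]; linarith
    have htm2 : tm < s0 := by rw [htm]; linarith
    have htm0 : t1 < tm := lt_of_le_of_lt hu0a htm1
    have htp1 : s0 < tp := by rw [htp]; linarith
    have htp2 : tp < t2 := by rw [htp]; linarith
    -- memberships in T for points of S in (t1,t2)
    have hmemT : ∀ v : ℝ, v ∈ lineS a F → t1 < v → v < t2 → v ∈ T :=
      fun v hv hv1 hv2 => Finset.mem_filter.mpr ⟨hv, hv1, hv2⟩
    have htmS : tm ∉ lineS a F := by
      intro hmem
      have : tm ∈ T := hmemT tm hmem htm0 (lt_trans htm2 hs0b)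
      exact absurd (hu0max tm this htm2) (not_le.mpr htm1)
    have htpS : tp ∉ lineS a F := by
      intro hmem
      have : tp ∈ T := hmemT tp hmem (lt_trans hs0a htp1) htp2
      exact absurd (T.le_max' tp this) (not_le.mpr htp1)
    -- J tp = J t2
    have hJtp : Jf a F tp = Jf a F t2 := by
      refine J_const hF hpos (le_of_lt htp2) ?_
      intro w hw hwS
      rcases eq_or_lt_of_le hw.2 with he | hlt2
      · exact h2 (he ▸ hwS)
      have : w ∈ T := hmemT w hwS (lt_trans hs0a (lt_of_lt_of_le htp1 hw.1)) hlt2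
      exact absurd (T.le_max' w this) (not_le.mpr (lt_of_lt_of_le htp1 hw.1))
    -- jump at s0
    have hjump := jump' hF hpos htm2 htp1 ?_ ?_
    rotate_left
    · intro w hw hwS
      have : w ∈ T := hmemT w hwS (lt_of_lt_of_le htm0 hw.1) (lt_trans hw.2 hs0b)
      exact absurd (hu0max w this hw.2) (not_le.mpr (lt_of_lt_of_le htm1 hw.1))
    · intro w hw hwS
      have : w ∈ T := hmemT w hwS (lt_trans hs0a hw.1) (lt_of_le_of_lt hw.2 htp2)
      exact absurd (T.le_max' w this) (not_le.mpr hw.1)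
    -- identify T-between-(t1,tm) with T'
    have hT2 : (lineS a F).filter (fun s => t1 < s ∧ s < tm) = T' := by
      apply Finset.ext
      intro v
      simp only [Finset.mem_filter, hT', hT]
      constructor
      · rintro ⟨hvS, hv1, hv2⟩
        exact ⟨⟨hvS, hv1, lt_trans (lt_trans hv2 htm2) hs0b⟩, lt_trans hv2 htm2⟩
      · rintro ⟨⟨hvS, hv1, _⟩, hvs0⟩
        refine ⟨hvS, hv1, ?_⟩
        exact lt_of_le_of_lt (hu0max v (Finset.mem_filter.mpr ⟨hvS, hv1, lt_trans hvs0 hs0b⟩) hvs0) htm1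
    have hTsplit : T'.card + 1 = N := by
      have hneg : T.filter (fun u => ¬ u < s0) = {s0} := by
        apply Finset.eq_singleton_iff_unique_mem.mpr
        constructor
        · exact Finset.mem_filter.mpr ⟨hs0T, lt_irrefl s0⟩
        · intro v hv
          have hv1 := Finset.mem_filter.mp hv
          exact le_antisymm (T.le_max' v hv1.1) (not_lt.mp hv1.2)
      have := Finset.card_filter_add_card_filter_not
        (s := T) (p := fun u => u < s0)
      rw [hneg] at this
      simpa [hT', hcard] using this
    have hT'card : T'.card = N - 1 := by omega
    have hIH := ih (N-1) (by omega) t1 tm h1 htmS (le_of_lt htm0) (by rw [hT2]; exact hT'card)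
    -- multiset count split
    have hMsplit : (F.roots.filter (fun z => z.re = a ∧ t1 < z.im ∧ z.im < t2)).card
        = (F.roots.filter (fun z => z.re = a ∧ t1 < z.im ∧ z.im < tm)).card + mS a F s0 := by
      classical
      have hcongr : F.roots.filter (fun z => z.re = a ∧ t1 < z.im ∧ z.im < t2)
          = F.roots.filter (fun z => (z.re = a ∧ t1 < z.im ∧ z.im < tm) ∨ (z.re = a ∧ z.im = s0)) := by
        apply Multiset.filter_congr
        intro z hz
        constructor
        · rintro ⟨hre, hi1, hi2⟩
          have himS : z.im ∈ lineS a F := mem_lineS.mpr ⟨z, hz, hre, rfl⟩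
          have himT : z.im ∈ T := hmemT z.im himS hi1 hi2
          rcases eq_or_lt_of_le (T.le_max' z.im himT) with he | hlt
          · exact Or.inr ⟨hre, he⟩
          · exact Or.inl ⟨hre, hi1, lt_of_le_of_lt (hu0max z.im himT hlt) htm1⟩
        · rintro (⟨hre, hi1, hi2⟩ | ⟨hre, hi⟩)
          · exact ⟨hre, hi1, lt_trans (lt_trans hi2 htm2) hs0b⟩
          · exact ⟨hre, hi ▸ hs0a, hi ▸ hs0b⟩
      rw [hcongr, mS]
      have hdisj := Multiset.filter_add_filter
        (fun z : ℂ => z.re = a ∧ t1 < z.im ∧ z.im < tm)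
        (fun z : ℂ => z.re = a ∧ z.im = s0) F.roots
      have hnil : F.roots.filter
          (fun z => (z.re = a ∧ t1 < z.im ∧ z.im < tm) ∧ (z.re = a ∧ z.im = s0)) = 0 := by
        rw [Multiset.filter_eq_nil]
        rintro z hz ⟨⟨_, _, hlt⟩, ⟨_, he⟩⟩
        rw [he] at hlt
        exact absurd hlt (not_lt.mpr (le_of_lt htm2))
      rw [hnil, add_zero] at hdisj
      rw [← hdisj, Multiset.card_add]
    -- finset k split
    have hksplit : (((lineS a F).filter (fun s => (t1 < s ∧ s < t2) ∧ Odd (mS a F s))).card : ℝ)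
        = (((lineS a F).filter (fun s => (t1 < s ∧ s < tm) ∧ Odd (mS a F s))).card : ℝ)
          + (if Odd (mS a F s0) then (1:ℝ) else 0) := by
      classical
      have hcongr : (lineS a F).filter (fun s => (t1 < s ∧ s < t2) ∧ Odd (mS a F s))
          = (lineS a F).filter (fun s => ((t1 < s ∧ s < tm) ∧ Odd (mS a F s))
              ∨ (s = s0 ∧ Odd (mS a F s))) := by
        apply Finset.filter_congr
        intro v hv
        try simp only [eq_iff_iff]
        constructor
        · rintro ⟨⟨hv1, hv2⟩, hodd⟩
          have hvT : v ∈ T := hmemT v hv hv1 hv2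
          rcases eq_or_lt_of_le (T.le_max' v hvT) with he | hlt
          · exact Or.inr ⟨he, hodd⟩
          · exact Or.inl ⟨⟨hv1, lt_of_le_of_lt (hu0max v hvT hlt) htm1⟩, hodd⟩
        · rintro (⟨⟨hv1, hv2⟩, hodd⟩ | ⟨he, hodd⟩)
          · exact ⟨⟨hv1, lt_trans (lt_trans hv2 htm2) hs0b⟩, hodd⟩
          · exact ⟨⟨he ▸ hs0a, he ▸ hs0b⟩, hodd⟩
      rw [hcongr, Finset.filter_or]
      rw [Finset.card_union_of_disjoint]
      · have hsingle : ((lineS a F).filter (fun s => s = s0 ∧ Odd (mS a F s))).card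
            = (if Odd (mS a F s0) then 1 else 0) := by
          by_cases hodd : Odd (mS a F s0)
          · rw [if_pos hodd]
            rw [Finset.card_eq_one]
            refine ⟨s0, ?_⟩
            apply Finset.eq_singleton_iff_unique_mem.mpr
            exact ⟨Finset.mem_filter.mpr ⟨hs0S, rfl, hodd⟩,
              fun v hv => (Finset.mem_filter.mp hv).2.1⟩
          · rw [if_neg hodd, Finset.card_eq_zero]
            apply Finset.filter_eq_empty_iff.mpr
            rintro v hv ⟨he, hodd'⟩
            exact hodd (he ▸ hodd')
        rw [hsingle]
        split_ifs with h <;> push_cast <;> ring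
      · rw [Finset.disjoint_filter]
        rintro v hv ⟨⟨_, hv2⟩, _⟩ ⟨he, _⟩
        rw [he] at hv2
        exact absurd hv2 (not_lt.mpr (le_of_lt htm2))
    -- combine
    have hJfin : ((Jf a F t2 : ℝ)) = (Jf a F tp : ℝ) := by exact_mod_cast hJtp.symm
    rw [hMsplit, hksplit, Nat.cast_add]
    have heq : (((F.roots.filter (fun z => z.re = a ∧ t1 < z.im ∧ z.im < tm)).card : ℝ)
          + (mS a F s0 : ℝ)) + 2*((Jf a F t2 : ℝ) - (Jf a F t1 : ℝ))
        = (((F.roots.filter (fun z => z.re = a ∧ t1 < z.im ∧ z.im < tm)).card : ℝ)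
            + 2*((Jf a F tm : ℝ) - (Jf a F t1 : ℝ)))
          + ((mS a F s0 : ℝ) + 2*((Jf a F tp : ℝ) - (Jf a F tm : ℝ))) := by
      rw [hJfin]; ring
    rw [heq]
    exact le_trans (abs_add_le _ _) (add_le_add hIH hjump)

/-! ### global counting lemmas -/

lemma mS_eq {a : ℝ} {F : ℂ[X]} {z : ℂ} (h : z.re = a) :
    mS a F z.im = F.roots.count z := by
  rw [mS, Multiset.count_eq_card_filter_eq]
  congr 1
  apply Multiset.filter_congr
  intro w _
  constructor
  · rintro ⟨hre, him⟩
    exact (Complex.ext (by rw [hre, h]) him).symm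
  · rintro rfl
    exact ⟨h, rfl⟩

lemma mS_count (a : ℝ) (F : ℂ[X]) (s : ℝ) :
    mS a F s = Multiset.count s ((F.roots.filter (fun z => z.re = a)).map Complex.im) := by
  rw [Multiset.count_map, mS, Multiset.filter_filter]
  congr 1
  apply Multiset.filter_congr
  intro w _
  constructor
  · rintro ⟨hre, him⟩; exact ⟨him.symm, hre⟩
  · rintro ⟨him, hre⟩; exact ⟨hre, him.symm⟩

lemma MM_sum (a : ℝ) (F : ℂ[X]) :
    Multiset.card (F.roots.filter (fun z => z.re = a)) = ∑ s ∈ lineS a F, mS a F s := by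
  have h1 := Multiset.toFinset_sum_count_eq ((F.roots.filter (fun z => z.re = a)).map Complex.im)
  have h2 : Multiset.card ((F.roots.filter (fun z => z.re = a)).map Complex.im)
      = Multiset.card (F.roots.filter (fun z => z.re = a)) := Multiset.card_map _ _
  rw [h2] at h1
  rw [← h1]
  apply Finset.sum_congr rfl
  intro s _
  rw [mS_count]

lemma parity_MM_kk (a : ℝ) (F : ℂ[X]) :
    (Multiset.card (F.roots.filter (fun z => z.re = a))) % 2
      = ((lineS a F).filter (fun s => Odd (mS a F s))).card % 2 := by
  have key : ((Multiset.card (F.roots.filter (fun z => z.re = a)) : ZMod 2))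
      = ((((lineS a F).filter (fun s => Odd (mS a F s))).card : ZMod 2)) := by
    rw [MM_sum, Finset.card_filter]
    push_cast
    apply Finset.sum_congr rfl
    intro s _
    by_cases hodd : Odd (mS a F s)
    · obtain ⟨c, hc⟩ := id hodd
      rw [if_pos hodd, hc]
      push_cast
      have h2 : (2 : ZMod 2) = 0 := rfl
      rw [h2]
      ring
    · obtain ⟨c, hc⟩ := Nat.not_odd_iff_even.mp hodd
      rw [if_neg hodd, hc]
      push_cast
      have h2 : ((c : ZMod 2) + c) = 2 * c := by ring
      rw [h2]
      have h3 : (2 : ZMod 2) = 0 := rfl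
      rw [h3]
      ring
  have := (ZMod.natCast_eq_natCast_iff _ _ _).mp key
  exact this

lemma k_bridge (a : ℝ) (F : ℂ[X]) :
    (F.roots.toFinset.filter (fun z => z.re = a ∧ Odd (F.rootMultiplicity z))).card
      = ((lineS a F).filter (fun s => Odd (mS a F s))).card := by
  classical
  apply Finset.card_bij (fun z _ => z.im)
  · rintro z hz
    obtain ⟨hzr, hre, hodd⟩ : z ∈ F.roots.toFinset ∧ z.re = a ∧ Odd (F.rootMultiplicity z) := by
      have := Finset.mem_filter.mp hz
      exact ⟨this.1, this.2.1, this.2.2⟩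
    have hzroots : z ∈ F.roots := Multiset.mem_toFinset.mp hzr
    refine Finset.mem_filter.mpr ⟨mem_lineS.mpr ⟨z, hzroots, hre, rfl⟩, ?_⟩
    rw [mS_eq hre, Polynomial.count_roots]
    exact hodd
  · rintro z1 hz1 z2 hz2 him
    have h1 := (Finset.mem_filter.mp hz1).2.1
    have h2 := (Finset.mem_filter.mp hz2).2.1
    exact Complex.ext (by rw [h1, h2]) him
  · rintro s hs
    obtain ⟨hsS, hodd⟩ := Finset.mem_filter.mp hs
    obtain ⟨z, hz, hre, him⟩ := mem_lineS.mp hsS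
    refine ⟨z, ?_, him⟩
    refine Finset.mem_filter.mpr ⟨Multiset.mem_toFinset.mpr hz, hre, ?_⟩
    rw [← Polynomial.count_roots, ← mS_eq hre, him]
    exact hodd

lemma trichotomy (a : ℝ) (F : ℂ[X]) :
    Multiset.card F.roots = rhoLT' F a + rhoGT' F a
      + Multiset.card (F.roots.filter (fun z => z.re = a)) := by
  classical
  have h1 := congrArg Multiset.card (Multiset.filter_add_not (fun z : ℂ => z.re < a) F.roots)
  rw [Multiset.card_add] at h1
  have h2 : F.roots.filter (fun z => ¬ z.re < a)
      = F.roots.filter (fun z => a < z.re ∨ z.re = a) := by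
    apply Multiset.filter_congr
    intro z _
    constructor
    · intro hnlt
      rcases eq_or_lt_of_le (not_lt.mp hnlt) with he | hlt
      · exact Or.inr he.symm
      · exact Or.inl hlt
    · rintro (hlt | he)
      · exact not_lt.mpr (le_of_lt hlt)
      · exact not_lt.mpr (le_of_eq he.symm)
  have h3 := Multiset.filter_add_filter (fun z : ℂ => a < z.re) (fun z : ℂ => z.re = a) F.roots
  have h4 : F.roots.filter (fun z => a < z.re ∧ z.re = a) = 0 := by
    rw [Multiset.filter_eq_nil]
    rintro z _ ⟨hlt, he⟩
    rw [he] at hlt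
    exact lt_irrefl a hlt
  rw [h4, add_zero] at h3
  have h5 := congrArg Multiset.card h3
  rw [Multiset.card_add] at h5
  rw [h2, ← h5] at h1
  rw [rhoLT', rhoGT']
  omega

lemma rhoLE_eq (a : ℝ) (F : ℂ[X]) :
    Multiset.card (F.roots.filter (fun z => z.re ≤ a))
      = rhoLT' F a + Multiset.card (F.roots.filter (fun z => z.re = a)) := by
  classical
  have h2 : F.roots.filter (fun z => z.re ≤ a)
      = F.roots.filter (fun z => z.re < a ∨ z.re = a) := by
    apply Multiset.filter_congr
    intro z _
    constructor
    · intro h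
      exact lt_or_eq_of_le h
    · rintro (hlt | he)
      · exact le_of_lt hlt
      · exact le_of_eq he
  have h3 := Multiset.filter_add_filter (fun z : ℂ => z.re < a) (fun z : ℂ => z.re = a) F.roots
  have h4 : F.roots.filter (fun z => z.re < a ∧ z.re = a) = 0 := by
    rw [Multiset.filter_eq_nil]
    rintro z _ ⟨hlt, he⟩
    rw [he] at hlt
    exact lt_irrefl a hlt
  rw [h4, add_zero] at h3
  have h5 := congrArg Multiset.card h3
  rw [Multiset.card_add] at h5
  rw [h2, ← h5, rhoLT']

lemma rhoGE_eq (a : ℝ) (F : ℂ[X]) :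
    Multiset.card (F.roots.filter (fun z => a ≤ z.re))
      = rhoGT' F a + Multiset.card (F.roots.filter (fun z => z.re = a)) := by
  classical
  have h2 : F.roots.filter (fun z => a ≤ z.re)
      = F.roots.filter (fun z => a < z.re ∨ z.re = a) := by
    apply Multiset.filter_congr
    intro z _
    constructor
    · intro h
      rcases eq_or_lt_of_le h with he | hlt
      · exact Or.inr he.symm
      · exact Or.inl hlt
    · rintro (hlt | he)
      · exact le_of_lt hlt
      · exact le_of_eq he.symm
  have h3 := Multiset.filter_add_filter (fun z : ℂ => a < z.re) (fun z : ℂ => z.re = a) F.roots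
  have h4 : F.roots.filter (fun z => a < z.re ∧ z.re = a) = 0 := by
    rw [Multiset.filter_eq_nil]
    rintro z _ ⟨hlt, he⟩
    rw [he] at hlt
    exact lt_irrefl a hlt
  rw [h4, add_zero] at h3
  have h5 := congrArg Multiset.card h3
  rw [Multiset.card_add] at h5
  rw [h2, ← h5, rhoGT']

lemma kk_le_MM (a : ℝ) (F : ℂ[X]) :
    ((lineS a F).filter (fun s => Odd (mS a F s))).card
      ≤ Multiset.card (F.roots.filter (fun z => z.re = a)) := by
  calc ((lineS a F).filter (fun s => Odd (mS a F s))).card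
      ≤ (lineS a F).card := Finset.card_filter_le _ _
    _ ≤ Multiset.card ((F.roots.filter (fun z => z.re = a)).map Complex.im) :=
        Multiset.toFinset_card_le _
    _ = Multiset.card (F.roots.filter (fun z => z.re = a)) := Multiset.card_map _ _

lemma exists_bounds (a : ℝ) (F : ℂ[X]) :
    ∃ tmin tmax : ℝ, tmin ≤ tmax ∧ (∀ s ∈ lineS a F, tmin < s ∧ s < tmax)
      ∧ tmin ∉ lineS a F ∧ tmax ∉ lineS a F := by
  obtain ⟨ub, hub⟩ := (lineS a F).bddAbove
  obtain ⟨lb, hlb⟩ := (lineS a F).bddBelow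
  refine ⟨min lb ub - 1, max ub (min lb ub - 1) + 1, by
    have := le_max_right ub (min lb ub - 1); linarith, ?_, ?_, ?_⟩
  · intro s hs
    have h1 : lb ≤ s := hlb (Finset.mem_coe.mpr hs)
    have h2 : s ≤ ub := hub (Finset.mem_coe.mpr hs)
    constructor
    · have := min_le_left lb ub; linarith
    · have := le_max_left ub (min lb ub - 1); linarith
  · intro hmem
    have h1 : lb ≤ min lb ub - 1 := hlb (Finset.mem_coe.mpr hmem)
    have := min_le_left lb ub; linarith
  · intro hmem
    have h2 : max ub (min lb ub - 1) + 1 ≤ ub := hub (Finset.mem_coe.mpr hmem)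
    have := le_max_left ub (min lb ub - 1); linarith

/-! ### tail bounds -/

lemma tail_top {a : ℝ} {F : ℂ[X]} (hF : F ≠ 0)
    (hpos : ∀ x : ℂ, x.re = a → 0 ≤ (F.eval x).re)
    {tmax : ℝ} (htmax : ∀ s ∈ lineS a F, s < tmax) (htmaxS : tmax ∉ lineS a F) :
    |F.leadingCoeff.arg + (Multiset.card F.roots : ℝ) * (Real.pi/2)
      + 2*Real.pi*(Jf a F tmax : ℝ)| ≤ Real.pi/2 := by
  have hev : ∀ᶠ t in Filter.atTop,
      Af a F t + 2*Real.pi*(Jf a F tmax : ℝ) = gf a F t := by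
    filter_upwards [Filter.eventually_ge_atTop tmax] with t ht
    have htS : t ∉ lineS a F := fun hmem => absurd (htmax t hmem) (not_lt.mpr ht)
    have hJ : Jf a F tmax = Jf a F t :=
      J_const hF hpos ht (fun u hu hmem => absurd (htmax u hmem) (not_lt.mpr hu.1))
    rw [hJ]
    exact (J_spec hF htS).symm
  have hlim : Filter.Tendsto (gf a F) Filter.atTop
      (𝓝 (F.leadingCoeff.arg + (Multiset.card F.roots : ℝ) * (Real.pi/2)
        + 2*Real.pi*(Jf a F tmax : ℝ))) :=
    Filter.Tendsto.congr' hev ((A_top a F).add tendsto_const_nhds)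
  exact le_of_tendsto hlim.abs (Filter.Eventually.of_forall (fun t => g_bound hpos t))

lemma tail_bot {a : ℝ} {F : ℂ[X]} (hF : F ≠ 0)
    (hpos : ∀ x : ℂ, x.re = a → 0 ≤ (F.eval x).re)
    {tmin : ℝ} (htmin : ∀ s ∈ lineS a F, tmin < s) (htminS : tmin ∉ lineS a F) :
    |F.leadingCoeff.arg + ((Multiset.card F.roots : ℝ) * (-(Real.pi/2))
      + 2*Real.pi*(rhoGT' F a : ℝ)) + 2*Real.pi*(Jf a F tmin : ℝ)| ≤ Real.pi/2 := by
  have hev : ∀ᶠ t in Filter.atBot,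
      Af a F t + 2*Real.pi*(Jf a F tmin : ℝ) = gf a F t := by
    filter_upwards [Filter.eventually_le_atBot tmin] with t ht
    have htS : t ∉ lineS a F := fun hmem => absurd (htmin t hmem) (not_lt.mpr ht)
    have hJ : Jf a F t = Jf a F tmin :=
      J_const hF hpos ht (fun u hu hmem => absurd (htmin u hmem) (not_lt.mpr hu.2))
    rw [← hJ]
    exact (J_spec hF htS).symm
  have hlim : Filter.Tendsto (gf a F) Filter.atBot
      (𝓝 (F.leadingCoeff.arg + ((Multiset.card F.roots : ℝ) * (-(Real.pi/2))
        + 2*Real.pi*(rhoGT' F a : ℝ)) + 2*Real.pi*(Jf a F tmin : ℝ))) :=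
    Filter.Tendsto.congr' hev ((A_bot a F).add tendsto_const_nhds)
  exact le_of_tendsto hlim.abs (Filter.Eventually.of_forall (fun t => g_bound hpos t))

/-! ### leading coefficient form -/

lemma lc_form {c : ℂ} (hc : c ≠ 0) {e : ℕ} {j : ℤ}
    (harg : c.arg = -(e:ℝ)*Real.pi - 2*Real.pi*(j:ℝ)) :
    ∃ r : ℝ, 0 < r ∧ c = (-1 : ℂ)^e * (r : ℂ) := by
  refine ⟨‖c‖, norm_pos_iff.mpr hc, ?_⟩
  have h0 := Complex.norm_mul_exp_arg_mul_I c
  have hexp : Complex.exp ((c.arg : ℂ) * Complex.I) = (-1 : ℂ)^e := by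
    rw [harg]
    have h1 : ((-(e:ℝ)*Real.pi - 2*Real.pi*(j:ℝ) : ℝ) : ℂ) * Complex.I
        = ((-(e:ℤ) : ℤ) : ℂ) * ((Real.pi : ℂ) * Complex.I)
          + ((-j : ℤ) : ℂ) * ((2:ℂ)*(Real.pi : ℂ)*Complex.I) := by
      push_cast; ring
    rw [h1, Complex.exp_add, Complex.exp_int_mul, Complex.exp_int_mul_two_pi_mul_I,
      Complex.exp_pi_mul_I, mul_one]
    rw [zpow_neg, zpow_natCast]
    refine inv_eq_of_mul_eq_one_left ?_
    rw [← mul_pow]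
    norm_num
  conv_lhs => rw [← h0, hexp]
  ring

end Stmt15Aux


set_option maxHeartbeats 1000000 in
open Stmt15Aux in
/-- let `F ≠ 0` satisfy `Re F(x) ≥ 0` on the line `Re x = a`, and let `k` be
the number of distinct roots of `F` on this line with odd multiplicity. Then
(1) `ρ_{>a}(F) ≤ ρ_{<a}(F) + k + 1`, `ρ_{<a}(F) ≤ ρ_{>a}(F) + k + 1`, and in particular
`ρ_{>a}(F) ≤ ρ_{≤a}(F) + 1`, `ρ_{<a}(F) ≤ ρ_{≥a}(F) + 1`;
(2) in either case of equality, `F` has odd degree `2d − 1` and its leading coefficient is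
a real number of sign `(−1)^d` (resp. `(−1)^{d−1}`). -/
theorem stmt15 (a : ℝ) (F : ℂ[X]) (hF : F ≠ 0)
    (hpos : ∀ x : ℂ, x.re = a → 0 ≤ (F.eval x).re)
    (k : ℕ)
    (hk : k = (F.roots.toFinset.filter
      (fun z => z.re = a ∧ Odd (F.rootMultiplicity z))).card) :
    (rhoGT F a ≤ rhoLT F a + k + 1 ∧ rhoLT F a ≤ rhoGT F a + k + 1 ∧
      rhoGT F a ≤ rhoLE F a + 1 ∧ rhoLT F a ≤ rhoGE F a + 1) ∧
    (rhoGT F a = rhoLT F a + k + 1 →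
      ∃ d : ℕ, 1 ≤ d ∧ F.natDegree = 2 * d - 1 ∧
        ∃ r : ℝ, 0 < r ∧ F.leadingCoeff = (-1 : ℂ) ^ d * (r : ℂ)) ∧
    (rhoLT F a = rhoGT F a + k + 1 →
      ∃ d : ℕ, 1 ≤ d ∧ F.natDegree = 2 * d - 1 ∧
        ∃ r : ℝ, 0 < r ∧ F.leadingCoeff = (-1 : ℂ) ^ (d - 1) * (r : ℂ)) := by
  classical
  have hrL : rhoLT F a = rhoLT' F a := rfl
  have hrG : rhoGT F a = rhoGT' F a := rfl
  obtain ⟨tmin, tmax, hmm, hbet, hminS, hmaxS⟩ := exists_bounds a F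
  have hMloc : (F.roots.filter (fun z => z.re = a ∧ tmin < z.im ∧ z.im < tmax))
      = (F.roots.filter (fun z => z.re = a)) := by
    apply Multiset.filter_congr
    intro z hz
    constructor
    · rintro ⟨hre, _, _⟩; exact hre
    · intro hre
      have hb := hbet z.im (mem_lineS.mpr ⟨z, hz, hre, rfl⟩)
      exact ⟨hre, hb.1, hb.2⟩
  have hkloc : ((lineS a F).filter (fun s => (tmin < s ∧ s < tmax) ∧ Odd (mS a F s)))
      = ((lineS a F).filter (fun s => Odd (mS a F s))) := by
    apply Finset.filter_congr
    intro s hs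
    try simp only [eq_iff_iff]
    constructor
    · rintro ⟨_, hodd⟩; exact hodd
    · intro hodd; exact ⟨hbet s hs, hodd⟩
  have hcore0 := core_count hF hpos
    (((lineS a F).filter (fun s => tmin < s ∧ s < tmax)).card) tmin tmax hminS hmaxS hmm rfl
  rw [hMloc, hkloc] at hcore0
  set MM := Multiset.card (F.roots.filter (fun z => z.re = a)) with hMMdef
  set kk := ((lineS a F).filter (fun s => Odd (mS a F s))).card with hkkdef
  set J2 := Jf a F tmax with hJ2def
  set J1 := Jf a F tmin with hJ1def
  set p := rhoLT F a with hpdef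
  set q := rhoGT F a with hqdef
  set n := Multiset.card F.roots with hndef
  have hkeq : k = kk := by rw [hk, hkkdef]; exact k_bridge a F
  have hdeg : F.natDegree = n := by
    rw [hndef]
    exact (Polynomial.splits_iff_card_roots.mp (IsAlgClosed.splits F)).symm
  have htri : n = p + q + MM := by
    rw [hndef, hrL, hrG, hMMdef]; exact trichotomy a F
  have hparity : MM % 2 = kk % 2 := by rw [hMMdef, hkkdef]; exact parity_MM_kk a F
  have hkkMM : kk ≤ MM := by rw [hMMdef, hkkdef]; exact kk_le_MM a F
  have hLp := tail_top hF hpos (fun s hs => (hbet s hs).2) hmaxS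
  have hLm := tail_bot hF hpos (fun s hs => (hbet s hs).1) hminS
  rw [← hndef, ← hJ2def] at hLp
  have hq2 : rhoGT' F a = q := hrG.symm
  rw [← hndef, ← hJ1def, hq2] at hLm
  have hLE : rhoLE F a = p + MM := by
    rw [hrL, hMMdef]; exact rhoLE_eq a F
  have hGE : rhoGE F a = q + MM := by
    rw [hrG, hMMdef]; exact rhoGE_eq a F
  clear_value MM kk J2 J1 p q n
  have hpi := Real.pi_pos
  have hE := abs_le.mp hcore0
  have hA1 := abs_le.mp hLp
  have hA2 := abs_le.mp hLm
  have hnR : (n:ℝ) = (p:ℝ) + (q:ℝ) + (MM:ℝ) := by exact_mod_cast htri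
  have hdiff : (F.leadingCoeff.arg + (n : ℝ) * (Real.pi/2) + 2*Real.pi*(J2:ℝ))
      - (F.leadingCoeff.arg + ((n : ℝ) * (-(Real.pi/2)) + 2*Real.pi*(q:ℝ)) + 2*Real.pi*(J1:ℝ))
      = Real.pi * ((p:ℝ) - (q:ℝ) + ((MM:ℝ) + 2*((J2:ℝ) - (J1:ℝ)))) := by
    rw [hnR]; ring
  have hkey : |(p:ℝ) - (q:ℝ) + ((MM:ℝ) + 2*((J2:ℝ) - (J1:ℝ)))| ≤ 1 := by
    rw [abs_le]
    constructor <;> nlinarith [hA1.1, hA1.2, hA2.1, hA2.2, hdiff, hpi]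
  have hKY := abs_le.mp hkey
  have hq_le : q ≤ p + k + 1 := by
    have h2 : (q:ℝ) ≤ (p:ℝ) + (kk:ℝ) + 1 := by linarith [hE.1, hE.2, hKY.1, hKY.2]
    rw [hkeq]; exact_mod_cast h2
  have hp_le : p ≤ q + k + 1 := by
    have h2 : (p:ℝ) ≤ (q:ℝ) + (kk:ℝ) + 1 := by linarith [hE.1, hE.2, hKY.1, hKY.2]
    rw [hkeq]; exact_mod_cast h2
  refine ⟨⟨hq_le, hp_le, ?_, ?_⟩, ?_, ?_⟩
  · rw [hLE]; omega
  · rw [hGE]; omega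
  · -- case rhoGT = rhoLT + k + 1
    intro heqn
    have hissue : (p:ℝ) - (q:ℝ) + ((MM:ℝ) + 2*((J2:ℝ) - (J1:ℝ))) = -1 := by
      have hqr : (q:ℝ) = (p:ℝ) + (kk:ℝ) + 1 := by
        rw [hkeq] at heqn; exact_mod_cast heqn
      linarith [hE.2, hKY.1]
    have hlp : F.leadingCoeff.arg + (n : ℝ)*(Real.pi/2) + 2*Real.pi*(J2:ℝ) = -(Real.pi/2) := by
      have hd2 : (F.leadingCoeff.arg + (n : ℝ) * (Real.pi/2) + 2*Real.pi*(J2:ℝ))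
          - (F.leadingCoeff.arg + ((n : ℝ) * (-(Real.pi/2)) + 2*Real.pi*(q:ℝ))
            + 2*Real.pi*(J1:ℝ)) = -Real.pi := by
        rw [hdiff, hissue]; ring
      linarith [hA1.1, hA2.2]
    have hnodd : n % 2 = 1 := by omega
    obtain ⟨d, hd1, hdn⟩ : ∃ d : ℕ, 1 ≤ d ∧ n = 2*d - 1 := ⟨(n+1)/2, by omega, by omega⟩
    have hnR2 : (n:ℝ) = 2*(d:ℝ) - 1 := by
      have h3 : n + 1 = 2*d := by omega
      have h4 : ((n:ℝ) + 1) = 2*(d:ℝ) := by exact_mod_cast h3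
      linarith
    rw [hnR2] at hlp
    have harg : F.leadingCoeff.arg = -((d:ℕ):ℝ)*Real.pi - 2*Real.pi*((J2:ℤ):ℝ) := by
      linear_combination hlp
    obtain ⟨r, hr, hform⟩ := lc_form (Polynomial.leadingCoeff_ne_zero.mpr hF) harg
    exact ⟨d, hd1, by omega, r, hr, hform⟩
  · -- case rhoLT = rhoGT + k + 1
    intro heqn
    have hissue : (p:ℝ) - (q:ℝ) + ((MM:ℝ) + 2*((J2:ℝ) - (J1:ℝ))) = 1 := by
      have hqr : (p:ℝ) = (q:ℝ) + (kk:ℝ) + 1 := by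
        rw [hkeq] at heqn; exact_mod_cast heqn
      linarith [hE.1, hKY.2]
    have hlp : F.leadingCoeff.arg + (n : ℝ)*(Real.pi/2) + 2*Real.pi*(J2:ℝ) = Real.pi/2 := by
      have hd2 : (F.leadingCoeff.arg + (n : ℝ) * (Real.pi/2) + 2*Real.pi*(J2:ℝ))
          - (F.leadingCoeff.arg + ((n : ℝ) * (-(Real.pi/2)) + 2*Real.pi*(q:ℝ))
            + 2*Real.pi*(J1:ℝ)) = Real.pi := by
        rw [hdiff, hissue]; ring
      linarith [hA1.2, hA2.1]
    have hnodd : n % 2 = 1 := by omega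
    obtain ⟨d, hd1, hdn⟩ : ∃ d : ℕ, 1 ≤ d ∧ n = 2*d - 1 := ⟨(n+1)/2, by omega, by omega⟩
    have hnR2 : (n:ℝ) = 2*(d:ℝ) - 1 := by
      have h3 : n + 1 = 2*d := by omega
      have h4 : ((n:ℝ) + 1) = 2*(d:ℝ) := by exact_mod_cast h3
      linarith
    rw [hnR2] at hlp
    have hcastd : ((d - 1 : ℕ) : ℝ) = (d:ℝ) - 1 := by
      rw [Nat.cast_sub hd1]; simp
    have harg : F.leadingCoeff.arg = -((d - 1 : ℕ):ℝ)*Real.pi - 2*Real.pi*((J2:ℤ):ℝ) := by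
      rw [hcastd]
      linear_combination hlp
    obtain ⟨r, hr, hform⟩ := lc_form (Polynomial.leadingCoeff_ne_zero.mpr hF) harg
    exact ⟨d, hd1, by omega, r, hr, hform⟩
end
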